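/- Let μ ∈ ℝᵈ, σ > 0, and n ≥ 2, and let v ∈ ℝᵈ be fixed with ‖v − μ‖₂ ≤ σ√(5d). Let P = N(μ, (σ²/n)·I_d) and Q = (1/n)v + N(((n−1)/n)μ, (σ²(n−1)/n²)·I_d) (i.e., Q is the Gaussian with mean (1/n)v + ((n−1)/n)μ and covariance (σ²(n−1)/n²)·I_d). Then the total variation distance satisfies TV(P, Q) ≤ √(5d/(n−1)) + √d/(n−1). -/

import Mathlib

open MeasureTheory ProbabilityTheory
open scoped NNReal

/-- The isotropic Gaussian `N(m, v·I_d)` on `ℝᵈ`, as a product of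
one-dimensional Gaussians. -/
noncomputable def gaussianVec {d : ℕ} (m : Fin d → ℝ) (v : ℝ≥0) :
    Measure (Fin d → ℝ) :=
  Measure.pi fun i => gaussianReal (m i) v

/-- Total variation distance: supremum over measurable events. -/
noncomputable def tvDist {α : Type*} [MeasurableSpace α]
    (P Q : Measure α) : ℝ :=
  sSup {x | ∃ E : Set α, MeasurableSet E ∧
    x = |(P E).toReal - (Q E).toReal|}

open Real
open scoped ENNReal

section AuxVar
variable {α : Type*} [MeasurableSpace α] {ν : Measure α}

lemma lintegral_pi_prod : ∀ {m : ℕ} (f : Fin m → ℝ → ℝ≥0∞), (∀ i, Measurable (f i)) →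
    ∫⁻ x : Fin m → ℝ, ∏ i, f i (x i) ∂(Measure.pi fun _ => volume) = ∏ i, ∫⁻ x, f i x := by
  intro m
  induction m with
  | zero =>
      intro f hf
      simp [MeasureTheory.Measure.pi_empty_univ]
  | succ k ih =>
      intro f hf
      have he := ((MeasureTheory.measurePreserving_piFinSuccAbove
        (fun _ : Fin (k+1) => (volume : Measure ℝ)) 0).symm)
      calc
        ∫⁻ x : Fin (k+1) → ℝ, ∏ i, f i (x i) ∂(Measure.pi fun _ => volume)
            = ∫⁻ x : ℝ × (Fin k → ℝ),
              f 0 x.1 * ∏ i : Fin k, f i.succ (x.2 i)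
              ∂((volume : Measure ℝ).prod (Measure.pi fun _ => volume)) := by
          rw [← he.lintegral_comp_emb (MeasurableEquiv.measurableEmbedding _)
            (fun x => ∏ i, f i (x i))]
          refine lintegral_congr fun x => ?_
          rw [Fin.prod_univ_succ]
          simp [MeasurableEquiv.piFinSuccAbove_symm_apply, Fin.insertNthEquiv,
            Fin.insertNth_zero, Fin.zero_succAbove]
        _ = (∫⁻ x, f 0 x) * ∏ i : Fin k, ∫⁻ x, f i.succ x := by
          rw [lintegral_prod_mul (f := f 0) (g := fun y : Fin k → ℝ => ∏ i : Fin k, f i.succ (y i))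
            (hf 0).aemeasurable
            (Finset.measurable_prod _ fun i _ =>
              (hf i.succ).comp (measurable_pi_apply i)).aemeasurable]
          rw [ih (fun i => f i.succ) (fun i => hf _)]
        _ = ∏ i, ∫⁻ x, f i x := by rw [Fin.prod_univ_succ]

/-- product density -/
noncomputable def pvec {d : ℕ} (m : Fin d → ℝ) (v : ℝ≥0) (x : Fin d → ℝ) : ℝ :=
  ∏ i, gaussianPDFReal (m i) v (x i)

lemma pvec_nonneg {d : ℕ} (m : Fin d → ℝ) (v : ℝ≥0) (x : Fin d → ℝ) : 0 ≤ pvec m v x :=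
  Finset.prod_nonneg fun i _ => gaussianPDFReal_nonneg _ _ _

lemma pvec_integrable {d : ℕ} (m : Fin d → ℝ) (v : ℝ≥0) :
    Integrable (pvec m v) (Measure.pi fun _ => volume) := by
  have := MeasureTheory.Integrable.fintype_prod (E := ℝ) (𝕜 := ℝ)
    (f := fun i : Fin d => gaussianPDFReal (m i) v) (fun i => integrable_gaussianPDFReal _ _)
  exact this

lemma gaussianVec_eq_withDensity {d : ℕ} (m : Fin d → ℝ) {v : ℝ≥0} (hv : v ≠ 0) :
    gaussianVec m v = (Measure.pi fun _ => (volume : Measure ℝ)).withDensity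
      fun x => ENNReal.ofReal (pvec m v x) := by
  rw [gaussianVec]
  refine Measure.pi_eq (μ := fun i => gaussianReal (m i) v) fun s hs => ?_
  rw [withDensity_apply _ (MeasurableSet.univ_pi hs)]
  have hind : ∀ x : Fin d → ℝ, (Set.univ.pi s).indicator
      (fun y => ENNReal.ofReal (pvec m v y)) x
      = ∏ i, (s i).indicator (fun t => ENNReal.ofReal (gaussianPDFReal (m i) v t)) (x i) := by
    intro x
    by_cases hx : x ∈ Set.univ.pi s
    · rw [Set.indicator_of_mem hx]
      rw [pvec, ENNReal.ofReal_prod_of_nonneg (fun i _ => gaussianPDFReal_nonneg _ _ _)]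
      refine Finset.prod_congr rfl fun i _ => ?_
      rw [Set.indicator_of_mem (hx i (Set.mem_univ i))]
    · rw [Set.indicator_of_notMem hx]
      rw [Set.mem_pi] at hx
      push_neg at hx
      obtain ⟨i, -, hi⟩ := hx
      symm
      apply Finset.prod_eq_zero (Finset.mem_univ i)
      rw [Set.indicator_of_notMem hi]
  rw [← lintegral_indicator (MeasurableSet.univ_pi hs)]
  · calc ∫⁻ x, (Set.univ.pi s).indicator (fun y => ENNReal.ofReal (pvec m v y)) x
          ∂(Measure.pi fun _ => volume)
        = ∫⁻ x : Fin d → ℝ, ∏ i, (s i).indicator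
            (fun t => ENNReal.ofReal (gaussianPDFReal (m i) v t)) (x i)
            ∂(Measure.pi fun _ => volume) := lintegral_congr hind
      _ = ∏ i, ∫⁻ t, (s i).indicator
            (fun t => ENNReal.ofReal (gaussianPDFReal (m i) v t)) t :=
          lintegral_pi_prod _ fun i => ((measurable_gaussianPDFReal _ _).ennreal_ofReal).indicator (hs i)
      _ = ∏ i, gaussianReal (m i) v (s i) := by
          refine Finset.prod_congr rfl fun i _ => ?_
          rw [lintegral_indicator (hs i), gaussianReal_apply _ hv]
          rfl

lemma gaussianVec_apply_toReal {d : ℕ} (m : Fin d → ℝ) {v : ℝ≥0} (hv : v ≠ 0)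
    {E : Set (Fin d → ℝ)} (hE : MeasurableSet E) :
    ((gaussianVec m v) E).toReal = ∫ x in E, pvec m v x ∂(Measure.pi fun _ => volume) := by
  rw [gaussianVec_eq_withDensity m hv, withDensity_apply _ hE,
    ← ofReal_integral_eq_lintegral_ofReal ((pvec_integrable m v).restrict)
      (ae_of_all _ (pvec_nonneg m v)),
    ENNReal.toReal_ofReal (integral_nonneg (pvec_nonneg m v))]

lemma my_cauchy_schwarz {f g : α → ℝ} (hf0 : ∀ x, 0 ≤ f x) (hg0 : ∀ x, 0 ≤ g x)
    (hf2 : Integrable (fun x => f x ^ 2) ν) (hg2 : Integrable (fun x => g x ^ 2) ν)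
    (hfg : Integrable (fun x => f x * g x) ν) :
    ∫ x, f x * g x ∂ν ≤ Real.sqrt (∫ x, f x ^ 2 ∂ν) * Real.sqrt (∫ x, g x ^ 2 ∂ν) := by
  set A := ∫ x, f x ^ 2 ∂ν with hA
  set B := ∫ x, g x ^ 2 ∂ν with hB
  have hA0 : 0 ≤ A := integral_nonneg fun x => sq_nonneg _
  have hB0 : 0 ≤ B := integral_nonneg fun x => sq_nonneg _
  have key : ∀ s : ℝ, 0 < s → ∫ x, f x * g x ∂ν ≤ (s * A + B / s) / 2 := by
    intro s hs
    have hptw : ∀ x, f x * g x ≤ (s * f x ^ 2 + g x ^ 2 / s) / 2 := by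
      intro x
      have hd : (s * f x ^ 2 + g x ^ 2 / s) / 2 - f x * g x = (s * f x - g x) ^ 2 / (2 * s) := by
        field_simp
        ring
      have : 0 ≤ (s * f x - g x) ^ 2 / (2 * s) := by positivity
      linarith
    calc ∫ x, f x * g x ∂ν ≤ ∫ x, (s * f x ^ 2 + g x ^ 2 / s) / 2 ∂ν :=
          integral_mono hfg (((hf2.const_mul s).add (hg2.div_const s)).div_const 2) hptw
      _ = (s * A + B / s) / 2 := by
          rw [integral_div, integral_add (hf2.const_mul s) (hg2.div_const s),
            integral_const_mul, integral_div]
  set I := ∫ x, f x * g x ∂ν with hI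
  rcases eq_or_lt_of_le hA0 with hA' | hA'
  · have hle : I ≤ 0 := by
      by_contra h
      push_neg at h
      have hkey := key (B / I + 1) (by positivity)
      rw [← hA'] at hkey
      have hBI : B / (B / I + 1) ≤ I := by
        rw [div_le_iff₀ (by positivity)]
        have hBII : I * (B / I + 1) = B + I := by
          field_simp
        linarith
      simp only [mul_zero, zero_add] at hkey
      linarith
    exact hle.trans (by positivity)
  · rcases eq_or_lt_of_le hB0 with hB' | hB'
    · have hle : I ≤ 0 := by
        by_contra h
        push_neg at h
        have hkey := key (I / A) (by positivity)
        rw [← hB'] at hkey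
        have hIA : I / A * A = I := div_mul_cancel₀ _ (ne_of_gt hA')
        simp only [zero_div, add_zero] at hkey
        rw [hIA] at hkey
        linarith
      exact hle.trans (by positivity)
    · have hsA : (0:ℝ) < Real.sqrt A := Real.sqrt_pos.mpr hA'
      have hsB : (0:ℝ) < Real.sqrt B := Real.sqrt_pos.mpr hB'
      have h := key (Real.sqrt B / Real.sqrt A) (by positivity)
      have hAs : Real.sqrt A * Real.sqrt A = A := Real.mul_self_sqrt hA0
      have hBs : Real.sqrt B * Real.sqrt B = B := Real.mul_self_sqrt hB0
      have heq : (Real.sqrt B / Real.sqrt A * A + B / (Real.sqrt B / Real.sqrt A)) / 2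
          = Real.sqrt A * Real.sqrt B := by
        rw [div_div_eq_mul_div, div_mul_eq_mul_div]
        field_simp
        linear_combination (-(Real.sqrt B ^ 2)) * hAs + (-(Real.sqrt A ^ 2)) * hBs
      rw [heq] at h
      exact h

/-- Per-event total variation bound via Hellinger/Bhattacharyya. -/
lemma abs_diff_le_bc {p q : α → ℝ} (hp0 : ∀ x, 0 ≤ p x) (hq0 : ∀ x, 0 ≤ q x)
    (hpi : Integrable p ν) (hqi : Integrable q ν)
    (hp1 : ∫ x, p x ∂ν = 1) (hq1 : ∫ x, q x ∂ν = 1)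
    {E : Set α} (hE : MeasurableSet E) :
    |∫ x in E, p x ∂ν - ∫ x in E, q x ∂ν|
      ≤ Real.sqrt (2 * (1 - ∫ x, Real.sqrt (p x * q x) ∂ν)) := by
  -- integrability of sqrt(pq)
  have hmsqrt : AEStronglyMeasurable (fun x => Real.sqrt (p x * q x)) ν :=
    (Real.continuous_sqrt.comp_aestronglyMeasurable (hpi.1.mul hqi.1))
  have hsqrt_le : ∀ x, Real.sqrt (p x * q x) ≤ (p x + q x) / 2 := by
    intro x
    have h1 : Real.sqrt (p x * q x) = Real.sqrt (p x) * Real.sqrt (q x) :=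
      Real.sqrt_mul (hp0 x) _
    nlinarith [sq_nonneg (Real.sqrt (p x) - Real.sqrt (q x)),
      Real.sq_sqrt (hp0 x), Real.sq_sqrt (hq0 x), Real.sqrt_nonneg (p x * q x)]
  have hBint : Integrable (fun x => Real.sqrt (p x * q x)) ν := by
    refine Integrable.mono' ((hpi.add hqi).div_const 2) hmsqrt (ae_of_all _ fun x => ?_)
    rw [Real.norm_of_nonneg (Real.sqrt_nonneg _)]
    exact hsqrt_le x
  have hpq : Integrable (fun x => p x + q x) ν := hpi.add hqi
  have h2s : Integrable (fun x => 2 * Real.sqrt (p x * q x)) ν := hBint.const_mul 2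
  set B := ∫ x, Real.sqrt (p x * q x) ∂ν with hBdef
  have hB0 : 0 ≤ B := integral_nonneg fun x => Real.sqrt_nonneg _
  have hB1 : B ≤ 1 := by
    have := integral_mono hBint (hpq.div_const 2) hsqrt_le
    rw [integral_div, integral_add hpi hqi, hp1, hq1] at this
    linarith
  -- L1 bound
  set f : α → ℝ := fun x => |Real.sqrt (p x) - Real.sqrt (q x)| with hfdef
  set g : α → ℝ := fun x => Real.sqrt (p x) + Real.sqrt (q x) with hgdef
  have hfg_eq : ∀ x, f x * g x = |p x - q x| := by
    intro x
    rw [hfdef, hgdef]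
    simp only []
    rw [← abs_of_nonneg (show 0 ≤ Real.sqrt (p x) + Real.sqrt (q x) by positivity),
      ← abs_mul]
    congr 1
    nlinarith [Real.sq_sqrt (hp0 x), Real.sq_sqrt (hq0 x)]
  have hf2_eq : ∀ x, f x ^ 2 = p x + q x - 2 * Real.sqrt (p x * q x) := by
    intro x
    rw [hfdef]
    simp only []
    rw [sq_abs, Real.sqrt_mul (hp0 x)]
    nlinarith [Real.sq_sqrt (hp0 x), Real.sq_sqrt (hq0 x)]
  have hg2_eq : ∀ x, g x ^ 2 = p x + q x + 2 * Real.sqrt (p x * q x) := by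
    intro x
    rw [hgdef]
    simp only []
    rw [Real.sqrt_mul (hp0 x)]
    nlinarith [Real.sq_sqrt (hp0 x), Real.sq_sqrt (hq0 x)]
  have hf2int : Integrable (fun x => f x ^ 2) ν := by
    have h : Integrable (fun x => p x + q x - 2 * Real.sqrt (p x * q x)) ν := hpq.sub h2s
    exact h.congr (ae_of_all _ fun x => (hf2_eq x).symm)
  have hg2int : Integrable (fun x => g x ^ 2) ν := by
    have h : Integrable (fun x => p x + q x + 2 * Real.sqrt (p x * q x)) ν := hpq.add h2s
    exact h.congr (ae_of_all _ fun x => (hg2_eq x).symm)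
  have hfgint : Integrable (fun x => f x * g x) ν := by
    refine (hpi.sub hqi).abs.congr (ae_of_all _ fun x => (hfg_eq x).symm)
  have hf2val : ∫ x, f x ^ 2 ∂ν = 2 - 2 * B := by
    rw [show (fun x => f x ^ 2) = fun x => p x + q x - 2 * Real.sqrt (p x * q x) from
      funext hf2_eq]
    rw [integral_sub hpq h2s, integral_add hpi hqi,
      integral_const_mul, hp1, hq1, ← hBdef]
    ring
  have hg2val : ∫ x, g x ^ 2 ∂ν = 2 + 2 * B := by
    rw [show (fun x => g x ^ 2) = fun x => p x + q x + 2 * Real.sqrt (p x * q x) from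
      funext hg2_eq]
    rw [integral_add hpq h2s, integral_add hpi hqi,
      integral_const_mul, hp1, hq1, ← hBdef]
    ring
  have hL1 : ∫ x, |p x - q x| ∂ν ≤ 2 * Real.sqrt (2 * (1 - B)) := by
    have hcs := my_cauchy_schwarz (f := f) (g := g)
      (fun x => abs_nonneg _) (fun x => by positivity) hf2int hg2int hfgint
    rw [hf2val, hg2val] at hcs
    have h1 : ∫ x, |p x - q x| ∂ν = ∫ x, f x * g x ∂ν :=
      integral_congr_ae (ae_of_all _ fun x => (hfg_eq x).symm)
    have h2 : Real.sqrt (2 + 2 * B) ≤ 2 := by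
      have h4 : Real.sqrt (2 + 2 * B) ≤ Real.sqrt 4 := Real.sqrt_le_sqrt (by linarith)
      rwa [show (4:ℝ) = 2^2 by norm_num, Real.sqrt_sq (by norm_num : (0:ℝ) ≤ 2)] at h4
    have h3 : Real.sqrt (2 - 2*B) = Real.sqrt (2 * (1 - B)) := by norm_num [mul_sub]
    calc ∫ x, |p x - q x| ∂ν = ∫ x, f x * g x ∂ν := h1
      _ ≤ Real.sqrt (2 - 2*B) * Real.sqrt (2 + 2*B) := hcs
      _ ≤ Real.sqrt (2 * (1 - B)) * 2 := by
          rw [← h3]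
          exact mul_le_mul_of_nonneg_left h2 (Real.sqrt_nonneg _)
      _ = 2 * Real.sqrt (2 * (1 - B)) := by ring
  -- event bound
  have hdiff : Integrable (fun x => p x - q x) ν := hpi.sub hqi
  have hsplit : ∫ x in E, (p x - q x) ∂ν + ∫ x in Eᶜ, (p x - q x) ∂ν = 0 := by
    rw [integral_add_compl hE hdiff, integral_sub hpi hqi, hp1, hq1]
    ring
  have habs1 : |∫ x in E, (p x - q x) ∂ν| ≤ ∫ x in E, |p x - q x| ∂ν := by
    simpa [Real.norm_eq_abs] using
      norm_integral_le_integral_norm (μ := ν.restrict E) (fun x => p x - q x)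
  have habs2 : |∫ x in Eᶜ, (p x - q x) ∂ν| ≤ ∫ x in Eᶜ, |p x - q x| ∂ν := by
    simpa [Real.norm_eq_abs] using
      norm_integral_le_integral_norm (μ := ν.restrict Eᶜ) (fun x => p x - q x)
  have habssum : ∫ x in E, |p x - q x| ∂ν + ∫ x in Eᶜ, |p x - q x| ∂ν
      = ∫ x, |p x - q x| ∂ν := integral_add_compl hE hdiff.abs
  have hEeq : ∫ x in E, p x ∂ν - ∫ x in E, q x ∂ν = ∫ x in E, (p x - q x) ∂ν :=
    (integral_sub hpi.restrict hqi.restrict).symm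
  rw [hEeq]
  have : |∫ x in E, (p x - q x) ∂ν| ≤ (∫ x, |p x - q x| ∂ν) / 2 := by
    have h4 : ∫ x in E, (p x - q x) ∂ν
        = (∫ x in E, (p x - q x) ∂ν - ∫ x in Eᶜ, (p x - q x) ∂ν) / 2 := by
      linarith
    rw [h4, abs_div]
    rw [abs_of_nonneg (show (0:ℝ) ≤ 2 by norm_num)]
    have := abs_sub (∫ x in E, (p x - q x) ∂ν) (∫ x in Eᶜ, (p x - q x) ∂ν)
    linarith
  linarith [this, hL1]

end AuxVar

lemma bc_shift (a b : ℝ) {v : ℝ≥0} (hv : v ≠ 0) :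
    ∫ x : ℝ, Real.sqrt (gaussianPDFReal a v x * gaussianPDFReal b v x)
      = Real.exp (-(a - b)^2 / (8 * (v:ℝ))) := by
  have hv0 : (0:ℝ) < (v:ℝ) := by
    have : 0 < v := pos_iff_ne_zero.mpr hv
    exact_mod_cast this
  have hc0 : (0:ℝ) ≤ (Real.sqrt (2 * π * v))⁻¹ := by positivity
  have hptw : ∀ x : ℝ, Real.sqrt (gaussianPDFReal a v x * gaussianPDFReal b v x)
      = Real.exp (-(a - b)^2 / (8 * (v:ℝ))) * gaussianPDFReal ((a + b) / 2) v x := by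
    intro x
    rw [gaussianPDFReal, gaussianPDFReal, gaussianPDFReal]
    rw [mul_mul_mul_comm]
    rw [Real.sqrt_mul (mul_nonneg hc0 hc0)]
    rw [Real.sqrt_mul_self hc0]
    rw [← Real.exp_add, ← Real.exp_half]
    have harg : (-(x - a) ^ 2 / (2 * (v:ℝ)) + -(x - b) ^ 2 / (2 * (v:ℝ))) / 2
        = -(a - b)^2 / (8 * (v:ℝ)) + -(x - (a + b) / 2) ^ 2 / (2 * (v:ℝ)) := by
      field_simp
      ring
    rw [harg, Real.exp_add]
    ring
  rw [integral_congr_ae (ae_of_all _ hptw), integral_const_mul,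
    integral_gaussianPDFReal_eq_one _ hv, mul_one]

lemma bc_scale (m : ℝ) {v w : ℝ≥0} (hv : v ≠ 0) (hw : w ≠ 0) :
    ∫ x : ℝ, Real.sqrt (gaussianPDFReal m v x * gaussianPDFReal m w x)
      = Real.sqrt (2 * Real.sqrt ((v:ℝ) * w) / ((v:ℝ) + w)) := by
  have hv0 : (0:ℝ) < (v:ℝ) := by
    have : 0 < v := pos_iff_ne_zero.mpr hv
    exact_mod_cast this
  have hw0 : (0:ℝ) < (w:ℝ) := by
    have : 0 < w := pos_iff_ne_zero.mpr hw
    exact_mod_cast this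
  set B : ℝ := ((v:ℝ) + w) / (4 * v * w) with hB
  have hB0 : 0 < B := by positivity
  have hcv : (0:ℝ) ≤ (Real.sqrt (2 * π * v))⁻¹ := by positivity
  have hcw : (0:ℝ) ≤ (Real.sqrt (2 * π * w))⁻¹ := by positivity
  have hptw : ∀ x : ℝ, Real.sqrt (gaussianPDFReal m v x * gaussianPDFReal m w x)
      = Real.sqrt ((Real.sqrt (2 * π * v))⁻¹ * (Real.sqrt (2 * π * w))⁻¹)
        * Real.exp (-(B * (x - m) ^ 2)) := by
    intro x
    rw [gaussianPDFReal, gaussianPDFReal]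
    rw [mul_mul_mul_comm]
    rw [Real.sqrt_mul (mul_nonneg hcv hcw)]
    rw [← Real.exp_add, ← Real.exp_half]
    congr 2
    rw [hB]
    field_simp
    ring
  rw [integral_congr_ae (ae_of_all _ hptw), integral_const_mul]
  have hshift : ∫ x : ℝ, Real.exp (-(B * (x - m) ^ 2))
      = ∫ x : ℝ, Real.exp (-(B * x ^ 2)) :=
    integral_sub_right_eq_self (fun x => Real.exp (-(B * x ^ 2))) m
  rw [hshift]
  have hgauss : ∫ x : ℝ, Real.exp (-(B * x ^ 2)) = Real.sqrt (π / B) := by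
    simpa [neg_mul] using integral_gaussian B
  rw [hgauss, ← Real.sqrt_mul (mul_nonneg hcv hcw)]
  congr 1
  have h2pi : Real.sqrt (2 * π * v) * Real.sqrt (2 * π * w)
      = 2 * π * Real.sqrt ((v:ℝ) * w) := by
    rw [← Real.sqrt_mul (by positivity)]
    rw [show 2 * π * (v:ℝ) * (2 * π * (w:ℝ)) = (2*π)^2 * ((v:ℝ)*(w:ℝ)) by ring]
    rw [Real.sqrt_mul (by positivity), Real.sqrt_sq (by positivity)]
  have hsq : Real.sqrt ((v:ℝ) * w) * Real.sqrt ((v:ℝ) * w) = (v:ℝ) * w :=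
    Real.mul_self_sqrt (by positivity)
  rw [← mul_inv, h2pi, hB]
  have hs0 : (0:ℝ) < Real.sqrt ((v:ℝ) * w) := Real.sqrt_pos.mpr (by positivity)
  have hvv : Real.sqrt (v:ℝ) * Real.sqrt (v:ℝ) = (v:ℝ) := Real.mul_self_sqrt hv0.le
  have hww : Real.sqrt (w:ℝ) * Real.sqrt (w:ℝ) = (w:ℝ) := Real.mul_self_sqrt hw0.le
  field_simp
  linear_combination (-4:ℝ) * hsq

lemma sqrt_finset_prod {ι : Type*} (s : Finset ι) (f : ι → ℝ) (hf : ∀ i ∈ s, 0 ≤ f i) :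
    Real.sqrt (∏ i ∈ s, f i) = ∏ i ∈ s, Real.sqrt (f i) := by
  induction s using Finset.cons_induction with
  | empty => simp
  | cons a s ha ih =>
      rw [Finset.prod_cons, Finset.prod_cons,
        Real.sqrt_mul (hf a (Finset.mem_cons_self a s)),
        ih fun i hi => hf i (Finset.mem_cons_of_mem hi)]

lemma pvec_integral_one {d : ℕ} (m : Fin d → ℝ) {v : ℝ≥0} (hv : v ≠ 0) :
    ∫ x, pvec m v x ∂(Measure.pi fun _ => volume) = 1 := by
  rw [show pvec m v = fun x => ∏ i, gaussianPDFReal (m i) v (x i) from rfl]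
  rw [MeasureTheory.integral_fintype_prod_eq_prod (𝕜 := ℝ)
    (f := fun i t => gaussianPDFReal (m i) v t)]
  simp [integral_gaussianPDFReal_eq_one _ hv]

lemma pvec_bc {d : ℕ} (m₁ m₂ : Fin d → ℝ) (v₁ v₂ : ℝ≥0) :
    ∫ x, Real.sqrt (pvec m₁ v₁ x * pvec m₂ v₂ x) ∂(Measure.pi fun _ => volume)
      = ∏ i, ∫ y : ℝ, Real.sqrt (gaussianPDFReal (m₁ i) v₁ y * gaussianPDFReal (m₂ i) v₂ y) := by
  have hptw : ∀ x : Fin d → ℝ, Real.sqrt (pvec m₁ v₁ x * pvec m₂ v₂ x)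
      = ∏ i, Real.sqrt (gaussianPDFReal (m₁ i) v₁ (x i) * gaussianPDFReal (m₂ i) v₂ (x i)) := by
    intro x
    rw [pvec, pvec, ← Finset.prod_mul_distrib]
    exact sqrt_finset_prod _ _ fun i _ =>
      mul_nonneg (gaussianPDFReal_nonneg _ _ _) (gaussianPDFReal_nonneg _ _ _)
  rw [integral_congr_ae (ae_of_all _ hptw), ← MeasureTheory.volume_pi]
  exact MeasureTheory.integral_fintype_prod_eq_prod (𝕜 := ℝ)
    (f := fun i y => Real.sqrt (gaussianPDFReal (m₁ i) v₁ y * gaussianPDFReal (m₂ i) v₂ y))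

lemma ratio_bound {t s : ℝ} (ht : 0 < t) (hs : 0 < s) :
    1 - 2 * Real.sqrt (t * s) / (t + s) ≤ ((t - s) / (t + s))^2 := by
  have hts : (0:ℝ) ≤ t * s := by positivity
  have hsq : Real.sqrt (t * s) * Real.sqrt (t * s) = t * s := Real.mul_self_sqrt hts
  have hamgm : 2 * Real.sqrt (t * s) ≤ t + s := by
    nlinarith [sq_nonneg (Real.sqrt t - Real.sqrt s), Real.sq_sqrt ht.le, Real.sq_sqrt hs.le,
      Real.sqrt_mul_self ht.le, Real.sqrt_mul (le_of_lt ht) s]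
  have h2 : 2 * (t * s) ≤ Real.sqrt (t * s) * (t + s) := by
    nlinarith [Real.sqrt_nonneg (t * s)]
  have h3 : ((t - s) / (t + s))^2 - (1 - 2 * Real.sqrt (t * s) / (t + s))
      = (2 * Real.sqrt (t * s) * (t + s) - 4 * (t * s)) / (t + s)^2 := by
    field_simp
    ring
  have h4 : (0:ℝ) ≤ (2 * Real.sqrt (t * s) * (t + s) - 4 * (t * s)) / (t + s)^2 := by
    apply div_nonneg _ (by positivity)
    linarith
  linarith

set_option maxHeartbeats 1000000 in
theorem tv_bound_mean_estimation (d n : ℕ) (hn : 2 ≤ n)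
    (μ v : Fin d → ℝ) (σ : ℝ) (hσ : 0 < σ)
    (hv : Real.sqrt (∑ i, (v i - μ i) ^ 2) ≤ σ * Real.sqrt (5 * d))
    (P Q : Measure (Fin d → ℝ))
    (hP : P = gaussianVec μ (⟨σ ^ 2 / n, by positivity⟩ : ℝ≥0))
    (hQ : Q = gaussianVec
        (fun i => (1 / (n : ℝ)) * v i + (((n : ℝ) - 1) / n) * μ i)
        (Real.toNNReal (σ ^ 2 * ((n : ℝ) - 1) / (n : ℝ) ^ 2))) :
    tvDist P Q ≤ Real.sqrt (5 * d / ((n : ℝ) - 1)) + Real.sqrt d / ((n : ℝ) - 1) := by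
  set N : ℝ := (n : ℝ) with hN
  have hN2 : (2:ℝ) ≤ N := by rw [hN]; exact_mod_cast hn
  have hN0 : 0 < N := by linarith
  have hN1 : 0 < N - 1 := by linarith
  set t : ℝ≥0 := (⟨σ ^ 2 / n, by positivity⟩ : ℝ≥0) with ht
  set s : ℝ≥0 := Real.toNNReal (σ ^ 2 * (N - 1) / N ^ 2) with hs
  have htc : (t : ℝ) = σ ^ 2 / N := rfl
  have hsval : 0 < σ ^ 2 * (N - 1) / N ^ 2 := by positivity
  have hsc : (s : ℝ) = σ ^ 2 * (N - 1) / N ^ 2 := Real.coe_toNNReal _ hsval.le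
  have htpos : (0:ℝ) < (t:ℝ) := by rw [htc]; positivity
  have hspos : (0:ℝ) < (s:ℝ) := by rw [hsc]; positivity
  have ht0 : t ≠ 0 := by
    intro h
    rw [h] at htpos
    simp at htpos
  have hs0 : s ≠ 0 := by
    intro h
    rw [h] at hspos
    simp at hspos
  set mQ : Fin d → ℝ := fun i => (1 / N) * v i + ((N - 1) / N) * μ i with hmQ
  set ν : Measure (Fin d → ℝ) := Measure.pi fun _ => volume with hν
  -- the two Bhattacharyya coefficients
  set c : ℝ := Real.sqrt (2 * Real.sqrt ((t:ℝ) * s) / ((t:ℝ) + s)) with hc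
  set S : ℝ := ∑ i, (v i - μ i) ^ 2 with hSdef
  have hS0 : 0 ≤ S := Finset.sum_nonneg fun i _ => sq_nonneg _
  have hS5 : S ≤ 5 * d * σ ^ 2 := by
    have h1 := mul_self_le_mul_self (Real.sqrt_nonneg S) hv
    rw [Real.mul_self_sqrt hS0] at h1
    have h2 : σ * Real.sqrt (5 * d) * (σ * Real.sqrt (5 * d))
        = σ ^ 2 * (5 * d) := by
      rw [mul_mul_mul_comm, Real.mul_self_sqrt (by positivity), ← sq]
    rw [h2] at h1
    linarith
  -- bounds on the two terms
  have hB1 : ∫ x, Real.sqrt (pvec μ t x * pvec mQ t x) ∂ν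
      = Real.exp (-(S / (8 * (t:ℝ) * N ^ 2))) := by
    rw [pvec_bc]
    have : ∀ i : Fin d, ∫ y : ℝ, Real.sqrt (gaussianPDFReal (μ i) t y * gaussianPDFReal (mQ i) t y)
        = Real.exp (-((v i - μ i) ^ 2 / (8 * (t:ℝ) * N ^ 2))) := by
      intro i
      rw [bc_shift _ _ ht0]
      congr 1
      have : μ i - mQ i = (μ i - v i) / N := by
        rw [hmQ]
        field_simp
        ring
      rw [this]
      field_simp
      ring
    rw [Finset.prod_congr rfl fun i _ => this i, ← Real.exp_sum]
    congr 1
    rw [hSdef, Finset.sum_div, ← Finset.sum_neg_distrib]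
  have hB2 : ∫ x, Real.sqrt (pvec mQ t x * pvec mQ s x) ∂ν = c ^ d := by
    rw [pvec_bc]
    rw [Finset.prod_congr rfl fun i _ => bc_scale (mQ i) ht0 hs0]
    simp [hc]
  -- per-event bound
  have key : ∀ E : Set (Fin d → ℝ), MeasurableSet E →
      |(P E).toReal - (Q E).toReal|
        ≤ Real.sqrt (2 * (1 - Real.exp (-(S / (8 * (t:ℝ) * N ^ 2)))))
          + Real.sqrt (2 * (1 - c ^ d)) := by
    intro E hE
    set R : Measure (Fin d → ℝ) := gaussianVec mQ t with hR
    have h1 : |(P E).toReal - (Q E).toReal|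
        ≤ |(P E).toReal - (R E).toReal| + |(R E).toReal - (Q E).toReal| :=
      abs_sub_le _ _ _
    have h2 : |(P E).toReal - (R E).toReal|
        ≤ Real.sqrt (2 * (1 - Real.exp (-(S / (8 * (t:ℝ) * N ^ 2))))) := by
      rw [hP, hR, gaussianVec_apply_toReal _ ht0 hE, gaussianVec_apply_toReal _ ht0 hE, ← hν]
      rw [← hB1]
      exact abs_diff_le_bc (pvec_nonneg _ _) (pvec_nonneg _ _)
        (pvec_integrable _ _) (pvec_integrable _ _)
        (pvec_integral_one _ ht0) (pvec_integral_one _ ht0) hE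
    have h3 : |(R E).toReal - (Q E).toReal| ≤ Real.sqrt (2 * (1 - c ^ d)) := by
      rw [hQ, hR, gaussianVec_apply_toReal _ ht0 hE, gaussianVec_apply_toReal _ hs0 hE, ← hν]
      rw [← hB2]
      exact abs_diff_le_bc (pvec_nonneg _ _) (pvec_nonneg _ _)
        (pvec_integrable _ _) (pvec_integrable _ _)
        (pvec_integral_one _ ht0) (pvec_integral_one _ hs0) hE
    linarith
  -- numeric bound term 1
  have hterm1 : Real.sqrt (2 * (1 - Real.exp (-(S / (8 * (t:ℝ) * N ^ 2)))))
      ≤ Real.sqrt (5 * d / (N - 1)) := by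
    apply Real.sqrt_le_sqrt
    have hz0 : 0 ≤ S / (8 * (t:ℝ) * N ^ 2) := by positivity
    have hexp : 1 - Real.exp (-(S / (8 * (t:ℝ) * N ^ 2))) ≤ S / (8 * (t:ℝ) * N ^ 2) := by
      have := Real.add_one_le_exp (-(S / (8 * (t:ℝ) * N ^ 2)))
      linarith
    have hzval : S / (8 * (t:ℝ) * N ^ 2) = S / (8 * σ ^ 2 * N) := by
      rw [htc]
      field_simp
    have hfin : 2 * (S / (8 * σ ^ 2 * N)) ≤ 5 * d / (N - 1) := by
      have hEq : 2 * (S / (8 * σ ^ 2 * N)) = S / (4 * σ ^ 2 * N) := by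
        field_simp
        ring
      rw [hEq, div_le_div_iff₀ (by positivity) hN1]
      have hmul : S * (N - 1) ≤ (5 * d * σ ^ 2) * (N - 1) :=
        mul_le_mul_of_nonneg_right hS5 hN1.le
      nlinarith [(Nat.cast_nonneg d : (0:ℝ) ≤ (d:ℝ)), sq_nonneg σ, pow_pos hσ 2]
    calc 2 * (1 - Real.exp (-(S / (8 * (t:ℝ) * N ^ 2))))
        ≤ 2 * (S / (8 * (t:ℝ) * N ^ 2)) := by linarith
      _ = 2 * (S / (8 * σ ^ 2 * N)) := by rw [hzval]
      _ ≤ 5 * d / (N - 1) := hfin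
  -- numeric bound term 2
  have hterm2 : Real.sqrt (2 * (1 - c ^ d)) ≤ Real.sqrt d / (N - 1) := by
    have hrad : (0:ℝ) ≤ 2 * Real.sqrt ((t:ℝ) * s) / ((t:ℝ) + s) := by positivity
    have hc0 : 0 ≤ c := Real.sqrt_nonneg _
    have hamgm : 2 * Real.sqrt ((t:ℝ) * s) ≤ (t:ℝ) + s := by
      nlinarith [sq_nonneg (Real.sqrt (t:ℝ) - Real.sqrt (s:ℝ)), Real.sq_sqrt htpos.le,
        Real.sq_sqrt hspos.le, Real.sqrt_mul htpos.le (s:ℝ), Real.sqrt_nonneg ((t:ℝ)*s)]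
    have hc1 : c ≤ 1 := by
      rw [hc]
      rw [show (1:ℝ) = Real.sqrt 1 by rw [Real.sqrt_one]]
      apply Real.sqrt_le_sqrt
      rw [div_le_one (by positivity)]
      linarith
    have hcsq : c * c = 2 * Real.sqrt ((t:ℝ) * s) / ((t:ℝ) + s) := Real.mul_self_sqrt hrad
    have hbern : 1 - c ^ d ≤ d * (1 - c) := by
      have := one_add_mul_le_pow (a := c - 1) (by linarith) d
      rw [add_sub_cancel] at this
      nlinarith
    have h1mc : 1 - c ≤ (((t:ℝ) - s) / ((t:ℝ) + s)) ^ 2 := by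
      have hcc : c * c ≤ c := by nlinarith
      have := ratio_bound htpos hspos
      rw [← hcsq] at this
      linarith
    have hratio : ((t:ℝ) - s) / ((t:ℝ) + s) = 1 / (2 * N - 1) := by
      rw [htc, hsc]
      have hne : (2 * N - 1) ≠ 0 := by nlinarith
      field_simp
      rw [eq_div_iff (by linarith)]
      ring
    have hfin : 2 * (1 - c ^ d) ≤ (d:ℝ) / (N - 1) ^ 2 := by
      have h2 : 2 * (1 - c ^ d) ≤ 2 * ((d:ℝ) * (1 / (2 * N - 1)) ^ 2) := by
        have := h1mc
        rw [hratio] at this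
        nlinarith [(Nat.cast_nonneg d : (0:ℝ) ≤ (d:ℝ)), hbern]
      have h3 : 2 * ((d:ℝ) * (1 / (2 * N - 1)) ^ 2) ≤ (d:ℝ) / (N - 1) ^ 2 := by
        have h2N : (0:ℝ) < 2 * N - 1 := by nlinarith
        have hEq : 2 * ((d:ℝ) * (1 / (2 * N - 1)) ^ 2) = 2 * (d:ℝ) / (2 * N - 1) ^ 2 := by
          field_simp
        rw [hEq, div_le_div_iff₀ (by positivity) (by positivity)]
        nlinarith [(Nat.cast_nonneg d : (0:ℝ) ≤ (d:ℝ)), hN2]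
      linarith
    calc Real.sqrt (2 * (1 - c ^ d)) ≤ Real.sqrt ((d:ℝ) / (N - 1) ^ 2) :=
          Real.sqrt_le_sqrt hfin
      _ = Real.sqrt d / (N - 1) := by
          rw [Real.sqrt_div ((Nat.cast_nonneg d : (0:ℝ) ≤ (d:ℝ))), Real.sqrt_sq hN1.le]
  -- conclude
  apply Real.sSup_le
  · rintro x ⟨E, hE, rfl⟩
    calc |(P E).toReal - (Q E).toReal|
        ≤ Real.sqrt (2 * (1 - Real.exp (-(S / (8 * (t:ℝ) * N ^ 2)))))
          + Real.sqrt (2 * (1 - c ^ d)) := key E hE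
      _ ≤ Real.sqrt (5 * d / (N - 1)) + Real.sqrt d / (N - 1) := add_le_add hterm1 hterm2
  · positivity
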